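/- Let Z be a non-negative real-valued random variable with continuous cumulative distribution function F_Z and finite mean E[Z] < ∞. Then ∫_0^1 E[ Z · 1{ Z > F_Z^{-1}(1 − alpha) } ] d alpha = E[ Z · F_Z(Z) ], where F_Z^{-1} denotes the left-continuous generalized inverse of F_Z. -/

import Mathlib

open MeasureTheory ProbabilityTheory
open Filter Set Topology

/-- The cumulative distribution function of a measure on `ℝ`. -/
noncomputable def cdfOf (μ : Measure ℝ) (y : ℝ) : ℝ := (μ (Set.Iic y)).toReal

/-- The left-continuous generalized inverse of a CDF: `F⁻¹(p) = inf {t | p ≤ F t}`. -/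
noncomputable def leftContInv (F : ℝ → ℝ) (p : ℝ) : ℝ := sInf {t : ℝ | p ≤ F t}

section aux
variable {μ : Measure ℝ} [IsProbabilityMeasure μ]

lemma cdfOf_eq_cdf : cdfOf μ = cdf μ := by
  ext x; rw [cdfOf, cdf_eq_real, measureReal_def]

lemma cdfOf_mono : Monotone (cdfOf μ) := by rw [cdfOf_eq_cdf]; exact monotone_cdf μ

lemma cdfOf_nonneg (y : ℝ) : 0 ≤ cdfOf μ y := ENNReal.toReal_nonneg

lemma cdfOf_le_one (y : ℝ) : cdfOf μ y ≤ 1 := by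
  rw [cdfOf_eq_cdf]; exact cdf_le_one μ y

lemma cdfOf_tendsto_atTop : Tendsto (cdfOf μ) atTop (𝓝 1) := by
  rw [cdfOf_eq_cdf]; exact tendsto_cdf_atTop μ

lemma cdfOf_tendsto_atBot : Tendsto (cdfOf μ) atBot (𝓝 0) := by
  rw [cdfOf_eq_cdf]; exact tendsto_cdf_atBot μ

lemma exists_cdfOf_gt {p : ℝ} (hp : p < 1) : ∃ t, p < cdfOf μ t :=
  ((cdfOf_tendsto_atTop (μ := μ)).eventually (eventually_gt_nhds hp)).exists

lemma bddBelow_inv_set {p : ℝ} (hp : 0 < p) : BddBelow {t : ℝ | p ≤ cdfOf μ t} := by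
  obtain ⟨t0, ht0⟩ := eventually_atBot.1 ((cdfOf_tendsto_atBot (μ := μ)).eventually (eventually_lt_nhds hp))
  exact ⟨t0, fun t ht => le_of_not_gt fun h => absurd ht (not_le.2 (ht0 t h.le))⟩

lemma nonempty_inv_set {p : ℝ} (hp : p < 1) : {t : ℝ | p ≤ cdfOf μ t}.Nonempty := by
  obtain ⟨t, ht⟩ := exists_cdfOf_gt (μ := μ) hp
  exact ⟨t, ht.le⟩

/-- If the inverse is `< z` then `p ≤ F z`. -/
lemma le_cdfOf_of_leftContInv_lt {p z : ℝ} (hp0 : 0 < p) (hp1 : p < 1)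
    (h : leftContInv (cdfOf μ) p < z) : p ≤ cdfOf μ z := by
  obtain ⟨t, ht, htz⟩ := (csInf_lt_iff (bddBelow_inv_set hp0) (nonempty_inv_set hp1)).1 h
  exact le_trans ht (cdfOf_mono htz.le)

/-- If `p < F z` then the inverse is `< z`. -/
lemma leftContInv_lt_of_lt_cdfOf (hcont : Continuous (cdfOf μ)) {p z : ℝ} (hp0 : 0 < p)
    (h : p < cdfOf μ z) : leftContInv (cdfOf μ) p < z := by
  have : ∀ᶠ t in 𝓝[<] z, p < cdfOf μ t := by
    have h2 := (hcont.tendsto z).mono_left (nhdsWithin_le_nhds : 𝓝[<] z ≤ 𝓝 z)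
    exact h2.eventually (eventually_gt_nhds h)
  obtain ⟨t, htp, htz⟩ := (this.and self_mem_nhdsWithin).exists
  calc leftContInv (cdfOf μ) p ≤ t := csInf_le (bddBelow_inv_set hp0) htp.le
  _ < z := htz

/-- fibers of a continuous cdf at levels in (0,1) are null. -/
lemma measure_cdfOf_fiber (hcont : Continuous (cdfOf μ)) {c : ℝ} (hc0 : 0 < c) (hc1 : c < 1) :
    μ {z | cdfOf μ z = c} = 0 := by
  set F := cdfOf μ with hFdef
  set A := {z : ℝ | F z = c} with hA
  rcases A.eq_empty_or_nonempty with h | hne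
  · rw [h]; simp
  have hclosed : IsClosed A := isClosed_singleton.preimage hcont
  have hbddB : BddBelow A := by
    obtain ⟨t0, ht0⟩ := eventually_atBot.1 ((cdfOf_tendsto_atBot (μ := μ)).eventually (eventually_lt_nhds hc0))
    exact ⟨t0, fun z hz => le_of_not_gt fun h => (ne_of_lt (ht0 z h.le)) hz⟩
  have hbddA : BddAbove A := by
    obtain ⟨t1, ht1⟩ := exists_cdfOf_gt (μ := μ) hc1
    refine ⟨t1, fun z hz => le_of_not_gt fun h => ?_⟩
    have : F t1 ≤ F z := cdfOf_mono h.le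
    rw [hz] at this; exact absurd this (not_le.2 ht1)
  set a := sInf A with ha
  set b := sSup A with hb
  have haA : a ∈ A := hclosed.csInf_mem hne hbddB
  have hbA : b ∈ A := hclosed.csSup_mem hne hbddA
  have hFb : F b = c := hbA
  have hFa : F a = c := haA
  refine le_antisymm (ENNReal.le_of_forall_pos_le_add fun ε hε h0 => ?_) zero_le
  rw [zero_add]
  -- find a' < a with F a - F a' < ε
  obtain ⟨δ, hδ, hδε⟩ := Metric.continuous_iff.1 hcont a (ε : ℝ) (by exact_mod_cast hε)
  set a' := a - δ/2 with ha'
  have ha'a : a' < a := by rw [ha']; linarith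
  have hFa' : |F a' - F a| < (ε : ℝ) := by
    have hd : dist a' a < δ := by
      rw [Real.dist_eq]
      have he : a' - a = -(δ/2) := by rw [ha']; ring
      rw [he, abs_neg, abs_of_nonneg (by linarith)]; linarith
    have := hδε a' hd
    rwa [Real.dist_eq] at this
  have hab : a ≤ b := csInf_le_csSup hne hbddB hbddA
  have hsub : A ⊆ Set.Ioc a' b := fun z hz =>
    ⟨lt_of_lt_of_le ha'a (csInf_le hbddB hz), le_csSup hbddA hz⟩
  have hμIic : ∀ x, μ (Set.Iic x) = ENNReal.ofReal (F x) := fun x => by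
    rw [hFdef, cdfOf, ENNReal.ofReal_toReal (measure_ne_top μ _)]
  have hIoc : μ (Set.Ioc a' b) = ENNReal.ofReal (F b - F a') := by
    rw [← Set.Iic_sdiff_Iic, measure_diff (Set.Iic_subset_Iic.2 (by linarith)) measurableSet_Iic.nullMeasurableSet (measure_ne_top μ _), hμIic, hμIic,
      ENNReal.ofReal_sub _ (cdfOf_nonneg _)]
  calc μ A ≤ μ (Set.Ioc a' b) := measure_mono hsub
  _ = ENNReal.ofReal (F b - F a') := hIoc
  _ ≤ ENNReal.ofReal (ε : ℝ) := by
      apply ENNReal.ofReal_le_ofReal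
      have := abs_lt.1 hFa'
      rw [hFb, ← hFa]; linarith
  _ = (ε : ENNReal) := ENNReal.ofReal_coe_nnreal

end aux

/-- **Integrated CAP-type identity.**
Let `Z` be a non-negative real-valued random variable with continuous CDF `F_Z` and finite
mean. Then `∫_0^1 E[Z · 1{Z > F_Z⁻¹(1−α)}] dα = E[Z · F_Z(Z)]`, where `F_Z⁻¹` is the
left-continuous generalized inverse of `F_Z`. -/
theorem integral_CAP_eq_expectation_mul_cdf
    {Ω : Type*} [MeasureSpace Ω] [IsProbabilityMeasure (ℙ : Measure Ω)]
    (Z : Ω → ℝ) (hZmeas : Measurable Z) (hZnn : ∀ ω, 0 ≤ Z ω)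
    (hZint : Integrable Z ℙ)
    (hcont : Continuous (cdfOf (Measure.map Z ℙ))) :
    ∫ α in Set.Ioo (0 : ℝ) 1,
        (∫ ω in {ω | leftContInv (cdfOf (Measure.map Z ℙ)) (1 - α) < Z ω}, Z ω ∂ℙ)
      = ∫ ω, Z ω * cdfOf (Measure.map Z ℙ) (Z ω) ∂ℙ := by
  have hμprob : IsProbabilityMeasure (Measure.map Z ℙ) :=
    Measure.isProbabilityMeasure_map hZmeas.aemeasurable
  set μ := Measure.map Z ℙ with hμ
  set F := cdfOf μ with hFdef
  have hFmono : Monotone F := cdfOf_mono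
  have hFmeas : Measurable F := hFmono.measurable
  have hu : Measurable fun ω => F (Z ω) := hFmeas.comp hZmeas
  have hnull : ∀ c : ℝ, 0 < c → c < 1 → ℙ {ω | F (Z ω) = c} = 0 := by
    intro c h0 h1
    have hpre : {ω | F (Z ω) = c} = Z ⁻¹' {z | F z = c} := rfl
    have hms : MeasurableSet {z | F z = c} := hFmeas (measurableSet_singleton c)
    rw [hpre, ← Measure.map_apply hZmeas hms]
    exact measure_cdfOf_fiber hcont h0 h1
  set f : ℝ → Ω → ℝ := fun α ω => if 1 - α < F (Z ω) then Z ω else 0 with hfdef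
  have step1 : ∀ α ∈ Set.Ioo (0:ℝ) 1,
      (∫ ω in {ω | leftContInv F (1-α) < Z ω}, Z ω ∂ℙ) = ∫ ω, f α ω ∂ℙ := by
    intro α hα
    have hp0 : 0 < 1 - α := by linarith [hα.2]
    have hp1 : 1 - α < 1 := by linarith [hα.1]
    have hae : {ω | leftContInv F (1-α) < Z ω} =ᵐ[ℙ] {ω | 1 - α < F (Z ω)} := by
      rw [MeasureTheory.ae_eq_set]
      constructor
      · refine measure_mono_null (fun ω hω => ?_) (hnull (1-α) hp0 hp1)
        obtain ⟨h1, h2⟩ := hω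
        have hle : 1 - α ≤ F (Z ω) := le_cdfOf_of_leftContInv_lt hp0 hp1 h1
        have : ¬ (1 - α < F (Z ω)) := h2
        exact le_antisymm (not_lt.1 this) hle
      · refine measure_mono_null (fun ω hω => ?_) (hnull (1-α) hp0 hp1)
        obtain ⟨h1, h2⟩ := hω
        exact absurd (leftContInv_lt_of_lt_cdfOf hcont hp0 h1) h2
    rw [setIntegral_congr_set hae,
      ← integral_indicator (measurableSet_lt measurable_const hu)]
    refine integral_congr_ae (Filter.Eventually.of_forall fun ω => ?_)
    simp [Set.indicator_apply, hfdef]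
  have hM : MeasurableSet {p : ℝ × Ω | 1 - p.1 < F (Z p.2)} :=
    measurableSet_lt (measurable_const.sub measurable_fst) (hu.comp measurable_snd)
  have hfm : Measurable (Function.uncurry f) := by
    refine Measurable.ite hM (hZmeas.comp measurable_snd) measurable_const
  have hgint : Integrable (fun p : ℝ × Ω => Z p.2)
      ((volume.restrict (Set.Ioo (0:ℝ) 1)).prod ℙ) := by
    have hmeas2 : AEStronglyMeasurable (fun p : ℝ × Ω => Z p.2)
        ((volume.restrict (Set.Ioo (0:ℝ) 1)).prod ℙ) :=
      (hZmeas.comp measurable_snd).aestronglyMeasurable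
    refine (integrable_prod_iff hmeas2).2 ⟨Filter.Eventually.of_forall fun x => hZint, ?_⟩
    have hc : Integrable (fun _ : ℝ => ∫ ω, ‖Z ω‖ ∂ℙ) (volume.restrict (Set.Ioo (0:ℝ) 1)) :=
      integrableOn_const measure_Ioo_lt_top.ne
    exact hc
  have hfint : Integrable (Function.uncurry f)
      ((volume.restrict (Set.Ioo (0:ℝ) 1)).prod ℙ) := by
    refine hgint.mono' hfm.aestronglyMeasurable
      (Filter.Eventually.of_forall fun p => ?_)
    by_cases h : 1 - p.1 < F (Z p.2)
    · simp [Function.uncurry, hfdef, h, abs_of_nonneg (hZnn p.2)]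
    · simp [Function.uncurry, hfdef, h, hZnn p.2]
  have inner : ∀ ω, (∫ α in Set.Ioo (0:ℝ) 1, f α ω) = Z ω * F (Z ω) := by
    intro ω
    have hu0 : 0 ≤ F (Z ω) := cdfOf_nonneg _
    have hu1 : F (Z ω) ≤ 1 := cdfOf_le_one _
    have hset : ∀ α : ℝ, f α ω = (Set.Ioi (1 - F (Z ω))).indicator (fun _ => Z ω) α := by
      intro α
      by_cases h : 1 - F (Z ω) < α
      · simp only [hfdef]
        rw [if_pos (by linarith)]
        exact (Set.indicator_of_mem h (fun _ => Z ω)).symm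
      · simp only [hfdef]
        rw [if_neg (fun hc => h (by linarith))]
        exact (Set.indicator_of_notMem h (fun _ => Z ω)).symm
    simp_rw [hset]
    rw [integral_indicator measurableSet_Ioi, Measure.restrict_restrict measurableSet_Ioi]
    have hseteq : Set.Ioi (1 - F (Z ω)) ∩ Set.Ioo 0 1 = Set.Ioo (1 - F (Z ω)) 1 := by
      ext x
      simp only [Set.mem_inter_iff, Set.mem_Ioi, Set.mem_Ioo]
      constructor
      · rintro ⟨h1, _, h3⟩; exact ⟨h1, h3⟩
      · rintro ⟨h1, h2⟩; exact ⟨h1, by linarith, h2⟩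
    rw [hseteq, integral_const, measureReal_restrict_apply_univ, Real.volume_real_Ioo_of_le (by linarith),
      show (1 : ℝ) - (1 - F (Z ω)) = F (Z ω) by ring,
      smul_eq_mul, mul_comm]
  calc ∫ α in Set.Ioo (0:ℝ) 1, (∫ ω in {ω | leftContInv F (1-α) < Z ω}, Z ω ∂ℙ)
      = ∫ α in Set.Ioo (0:ℝ) 1, ∫ ω, f α ω ∂ℙ :=
        setIntegral_congr_fun measurableSet_Ioo step1
    _ = ∫ ω, ∫ α in Set.Ioo (0:ℝ) 1, f α ω ∂ℙ := integral_integral_swap hfint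
    _ = ∫ ω, Z ω * F (Z ω) ∂ℙ :=
        integral_congr_ae (Filter.Eventually.of_forall fun ω => inner ω)
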